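/- There exist δ0 > 0 and n0 ∈ ℕ such that the following holds for all 0 < δ ≤ δ0 and n ≥ n0. Assume the Setup. Then G has at most one edge with both endpoints in D_1' and at most one edge with both endpoints in D_2'. -/

import Mathlib

open SimpleGraph

/-- The number of triangles (copies of `K₃`) in a graph `G`, i.e. `N(K₃, G)`. -/
noncomputable def triangleCount {V : Type*} (G : SimpleGraph V) : ℕ :=
  Set.ncard {s : Finset V | G.IsNClique 3 s}

/-- `G` contains a subgraph isomorphic to `H`. -/
def Contains {W V : Type*} (H : SimpleGraph W) (G : SimpleGraph V) : Prop :=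
  ∃ f : H →g G, Function.Injective f

/-- `G` is `H`-free: it contains no subgraph isomorphic to `H`. -/
def Free {W V : Type*} (H : SimpleGraph W) (G : SimpleGraph V) : Prop :=
  ¬ Contains H G

/-- The expansion `F^△` of a graph `F`: each edge `uv` of `F` is replaced by a triangle
`u v w_{uv}` where the new vertices `w_{uv}` are pairwise distinct and outside `V(F)`. -/
def expansion {V : Type*} (F : SimpleGraph V) : SimpleGraph (V ⊕ F.edgeSet) :=
  SimpleGraph.fromRel (fun a b =>
    (∃ u v, a = Sum.inl u ∧ b = Sum.inl v ∧ F.Adj u v) ∨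
    (∃ u, ∃ e : F.edgeSet, a = Sum.inl u ∧ b = Sum.inr e ∧ u ∈ (e : Sym2 V)))

/-- `C₄^△`, the expansion of the 4-edge cycle: a graph on 8 vertices. -/
def C4expansion : SimpleGraph ((Fin 4) ⊕ (SimpleGraph.cycleGraph 4).edgeSet) :=
  expansion (SimpleGraph.cycleGraph 4)

/-- The generalized Turán number `ex(n, K₃, H)`: the maximum number of triangles in an
`H`-free graph on `n` vertices. -/
noncomputable def exTriangles (n : ℕ) {W : Type*} (H : SimpleGraph W) : ℕ :=
  sSup {k | ∃ G : SimpleGraph (Fin n), _root_.Free H G ∧ triangleCount G = k}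

/-- `T(n)`: the complete bipartite graph on `Fin n` with parts
`X = {v : v < ⌊n/2⌋}` (of size `⌊n/2⌋`) and `Y = {v : v ≥ ⌊n/2⌋}` (of size `⌈n/2⌉`). -/
def Tgraph (n : ℕ) : SimpleGraph (Fin n) :=
  SimpleGraph.fromRel (fun u v => u.val < n / 2 ∧ n / 2 ≤ v.val)

/-- `T⁺(n)`: the graph `T(n)` with one extra edge (between vertices `0` and `1`) added
inside the part `X`. -/
def TgraphPlus (n : ℕ) : SimpleGraph (Fin n) :=
  SimpleGraph.fromRel (fun u v =>
    (u.val < n / 2 ∧ n / 2 ≤ v.val) ∨ (u.val = 0 ∧ v.val = 1))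

/-- `T⁼(n)`: the graph obtained from `T(n)` by adding the edge `e₁ = {0,1}` inside `X`,
adding the edge `e₂ = {⌊n/2⌋, ⌊n/2⌋+1}` inside `Y`, and deleting the perfect matching
`{0,⌊n/2⌋}, {1,⌊n/2⌋+1}` between the endpoints of `e₁` and of `e₂`. -/
def TgraphEq (n : ℕ) : SimpleGraph (Fin n) :=
  SimpleGraph.fromRel (fun u v =>
    (u.val < n / 2 ∧ n / 2 ≤ v.val ∧
      ¬(u.val = 0 ∧ v.val = n / 2) ∧ ¬(u.val = 1 ∧ v.val = n / 2 + 1))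
    ∨ (u.val = 0 ∧ v.val = 1) ∨ (u.val = n / 2 ∧ v.val = n / 2 + 1))

/-- The join `K₁ ⋈ H` of a single new vertex with the graph `H`. -/
def joinK1 {V : Type*} (H : SimpleGraph V) : SimpleGraph (Option V) :=
  SimpleGraph.fromRel (fun u v =>
    u = none ∨ ∃ a b, u = some a ∧ v = some b ∧ H.Adj a b)

/-- `S(n) = K₁ ⋈ T(n-1)`. -/
def Sgraph (n : ℕ) : SimpleGraph (Option (Fin (n - 1))) := joinK1 (Tgraph (n - 1))

/-- `S⁺(n) = K₁ ⋈ T⁺(n-1)`. -/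
def SgraphPlus (n : ℕ) : SimpleGraph (Option (Fin (n - 1))) := joinK1 (TgraphPlus (n - 1))

/-- `S⁼(n) = K₁ ⋈ T⁼(n-1)`. -/
def SgraphEq (n : ℕ) : SimpleGraph (Option (Fin (n - 1))) := joinK1 (TgraphEq (n - 1))

/-- `d_G(uv)`: the number of triangles of `G` containing the edge `uv`, i.e. the number of
common neighbors of `u` and `v`. -/
noncomputable def edgeTriangleDeg {V : Type*} (G : SimpleGraph V) (u v : V) : ℕ :=
  {w : V | G.Adj u w ∧ G.Adj v w}.ncard

/-- `e_G(A, B)`: the number of edges of `G` with one endpoint in `A` and the other in `B`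
(for disjoint `A`, `B`). -/
noncomputable def crossEdges {V : Type*} (G : SimpleGraph V) (A B : Set V) : ℕ :=
  {p : V × V | p.1 ∈ A ∧ p.2 ∈ B ∧ G.Adj p.1 p.2}.ncard

lemma fin4_cases : ∀ j : Fin 4, j = 0 ∨ j = 1 ∨ j = 2 ∨ j = 3 := by decide

lemma cycle4_edge_class : ∀ z ∈ (cycleGraph 4).edgeSet, ∃ i : Fin 4, z = s(i, i + 1) := by
  intro z hz
  induction z using Sym2.ind with
  | _ u v =>
    rw [SimpleGraph.mem_edgeSet, cycleGraph_adj'] at hz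
    revert hz
    rcases fin4_cases u with rfl | rfl | rfl | rfl <;>
      rcases fin4_cases v with rfl | rfl | rfl | rfl <;> decide

lemma contains_C4exp {V : Type*} [DecidableEq V] (G : SimpleGraph V)
    (p0 p1 p2 p3 q0 q1 q2 q3 : V)
    (a01 : G.Adj p0 p1) (a12 : G.Adj p1 p2) (a23 : G.Adj p2 p3) (a30 : G.Adj p3 p0)
    (b00 : G.Adj q0 p0) (b01 : G.Adj q0 p1)
    (b11 : G.Adj q1 p1) (b12 : G.Adj q1 p2)
    (b22 : G.Adj q2 p2) (b23 : G.Adj q2 p3)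
    (b33 : G.Adj q3 p3) (b30 : G.Adj q3 p0)
    (dp01 : p0 ≠ p1) (dp02 : p0 ≠ p2) (dp03 : p0 ≠ p3)
    (dp12 : p1 ≠ p2) (dp13 : p1 ≠ p3) (dp23 : p2 ≠ p3)
    (dq01 : q0 ≠ q1) (dq02 : q0 ≠ q2) (dq03 : q0 ≠ q3)
    (dq12 : q1 ≠ q2) (dq13 : q1 ≠ q3) (dq23 : q2 ≠ q3)
    (e00 : p0 ≠ q0) (e01 : p0 ≠ q1) (e02 : p0 ≠ q2) (e03 : p0 ≠ q3)
    (e10 : p1 ≠ q0) (e11 : p1 ≠ q1) (e12 : p1 ≠ q2) (e13 : p1 ≠ q3)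
    (e20 : p2 ≠ q0) (e21 : p2 ≠ q1) (e22 : p2 ≠ q2) (e23 : p2 ≠ q3)
    (e30 : p3 ≠ q0) (e31 : p3 ≠ q1) (e32 : p3 ≠ q2) (e33 : p3 ≠ q3) :
    Contains C4expansion G := by
  let p : Fin 4 → V := fun i => if i = 0 then p0 else if i = 1 then p1 else if i = 2 then p2 else p3
  let q : Sym2 (Fin 4) → V := fun z =>
    if z = s(0, 1) then q0 else if z = s(1, 2) then q1 else if z = s(2, 3) then q2 else q3
  have hpadj : ∀ u v : Fin 4, (cycleGraph 4).Adj u v → G.Adj (p u) (p v) := by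
    intro u v huv
    rw [cycleGraph_adj'] at huv
    rcases fin4_cases u with rfl | rfl | rfl | rfl <;>
      rcases fin4_cases v with rfl | rfl | rfl | rfl <;>
      first
        | exact absurd huv (by decide)
        | exact a01 | exact a12 | exact a23 | exact a30
        | exact a01.symm | exact a12.symm | exact a23.symm | exact a30.symm
  have hqadj : ∀ (z : Sym2 (Fin 4)), z ∈ (cycleGraph 4).edgeSet → ∀ u ∈ z, G.Adj (p u) (q z) := by
    intro z hz u hu
    obtain ⟨i, rfl⟩ := cycle4_edge_class z hz
    rw [Sym2.mem_iff] at hu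
    rcases fin4_cases i with rfl | rfl | rfl | rfl <;>
      rcases hu with rfl | rfl <;>
      first
        | exact b00.symm | exact b01.symm | exact b11.symm | exact b12.symm
        | exact b22.symm | exact b23.symm | exact b33.symm | exact b30.symm
  let f : (Fin 4) ⊕ (cycleGraph 4).edgeSet → V := Sum.elim p (fun e => q e.val)
  refine ⟨⟨f, ?_⟩, ?_⟩
  · intro a b hab
    obtain ⟨hne, h | h⟩ := hab
    · rcases h with ⟨u, v, rfl, rfl, huv⟩ | ⟨u, e, rfl, rfl, hu⟩
      · exact hpadj u v huv
      · exact hqadj e.val e.2 u hu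
    · rcases h with ⟨u, v, rfl, rfl, huv⟩ | ⟨u, e, rfl, rfl, hu⟩
      · exact (hpadj u v huv).symm
      · exact (hqadj e.val e.2 u hu).symm
  · show Function.Injective f
    intro a b hab
    rcases a with i | e <;> rcases b with j | e' <;>
      simp only [f, Sum.elim_inl, Sum.elim_inr] at hab
    · rcases fin4_cases i with rfl | rfl | rfl | rfl <;>
        rcases fin4_cases j with rfl | rfl | rfl | rfl <;>
        first
          | rfl
          | exact absurd hab dp01 | exact absurd hab dp02 | exact absurd hab dp03
          | exact absurd hab dp12 | exact absurd hab dp13 | exact absurd hab dp23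
          | exact absurd hab.symm dp01 | exact absurd hab.symm dp02 | exact absurd hab.symm dp03
          | exact absurd hab.symm dp12 | exact absurd hab.symm dp13 | exact absurd hab.symm dp23
    · exfalso
      obtain ⟨k, hk⟩ := cycle4_edge_class e'.val e'.2
      rw [hk] at hab
      rcases fin4_cases i with rfl | rfl | rfl | rfl <;>
        rcases fin4_cases k with rfl | rfl | rfl | rfl <;>
        first
          | exact e00 hab | exact e01 hab | exact e02 hab | exact e03 hab
          | exact e10 hab | exact e11 hab | exact e12 hab | exact e13 hab
          | exact e20 hab | exact e21 hab | exact e22 hab | exact e23 hab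
          | exact e30 hab | exact e31 hab | exact e32 hab | exact e33 hab
    · exfalso
      obtain ⟨k, hk⟩ := cycle4_edge_class e.val e.2
      rw [hk] at hab
      replace hab := hab.symm
      rcases fin4_cases j with rfl | rfl | rfl | rfl <;>
        rcases fin4_cases k with rfl | rfl | rfl | rfl <;>
        first
          | exact e00 hab | exact e01 hab | exact e02 hab | exact e03 hab
          | exact e10 hab | exact e11 hab | exact e12 hab | exact e13 hab
          | exact e20 hab | exact e21 hab | exact e22 hab | exact e23 hab
          | exact e30 hab | exact e31 hab | exact e32 hab | exact e33 hab
    · obtain ⟨k, hk⟩ := cycle4_edge_class e.val e.2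
      obtain ⟨k', hk'⟩ := cycle4_edge_class e'.val e'.2
      rw [hk, hk'] at hab
      have : e.val = e'.val := by
        rw [hk, hk']
        rcases fin4_cases k with rfl | rfl | rfl | rfl <;>
          rcases fin4_cases k' with rfl | rfl | rfl | rfl <;>
          first
            | rfl
            | exact absurd hab dq01 | exact absurd hab dq02 | exact absurd hab dq03
            | exact absurd hab dq12 | exact absurd hab dq13 | exact absurd hab dq23
            | exact absurd hab.symm dq01 | exact absurd hab.symm dq02 | exact absurd hab.symm dq03
            | exact absurd hab.symm dq12 | exact absurd hab.symm dq13 | exact absurd hab.symm dq23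
      exact congrArg Sum.inr (Subtype.ext this)

lemma exists_avoid {n : ℕ} {S : Set (Fin n)} {L : Finset (Fin n)} (h : L.card < S.ncard) :
    ∃ y ∈ S, y ∉ L := by
  by_contra hc
  push_neg at hc
  have hsub : S ⊆ (↑L : Set (Fin n)) := fun y hy => hc y hy
  have := Set.ncard_le_ncard hsub (Set.toFinite _)
  rw [Set.ncard_coe_finset] at this
  omega

lemma inter_lower {n : ℕ} {A B W : Set (Fin n)} (hA : A ⊆ W) (hB : B ⊆ W) :
    A.ncard + B.ncard ≤ (A ∩ B).ncard + W.ncard := by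
  have h := Set.ncard_inter_add_ncard_union A B (Set.toFinite _) (Set.toFinite _)
  have h2 : (A ∪ B).ncard ≤ W.ncard :=
    Set.ncard_le_ncard (Set.union_subset hA hB) (Set.toFinite _)
  omega

lemma card_le_seven {α : Type*} [DecidableEq α] (a b c d e f g : α) :
    ({a, b, c, d, e, f, g} : Finset α).card ≤ 7 := by
  have h1 := Finset.card_insert_le a ({b, c, d, e, f, g} : Finset α)
  have h2 := Finset.card_insert_le b ({c, d, e, f, g} : Finset α)
  have h3 := Finset.card_insert_le c ({d, e, f, g} : Finset α)
  have h4 := Finset.card_insert_le d ({e, f, g} : Finset α)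
  have h5 := Finset.card_insert_le e ({f, g} : Finset α)
  have h6 := Finset.card_insert_le f ({g} : Finset α)
  have h7 : ({g} : Finset α).card = 1 := Finset.card_singleton g
  omega

lemma crossEdges_le {n : ℕ} (G : SimpleGraph (Fin n)) (A B : Set (Fin n)) :
    crossEdges G A B ≤ A.ncard * B.ncard := by
  classical
  have hsub : {p : Fin n × Fin n | p.1 ∈ A ∧ p.2 ∈ B ∧ G.Adj p.1 p.2} ⊆ A ×ˢ B :=
    fun p hp => ⟨hp.1, hp.2.1⟩
  have h := Set.ncard_le_ncard hsub (Set.toFinite _)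
  have h2 : (A ×ˢ B).ncard = A.ncard * B.ncard := by
    rw [Set.ncard_eq_toFinset_card', Set.toFinset_prod, Finset.card_product,
      ← Set.ncard_eq_toFinset_card', ← Set.ncard_eq_toFinset_card']
  rw [crossEdges]
  omega

lemma parts_card {n : ℕ} (hn : 1 ≤ n) (x : Fin n) (V1 V2 : Set (Fin n))
    (hdisj : Disjoint V1 V2) (hcover : V1 ∪ V2 = {x}ᶜ) :
    V1.ncard + V2.ncard = n - 1 := by
  classical
  rw [← Set.ncard_union_eq hdisj (Set.toFinite _) (Set.toFinite _), hcover]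
  rw [Set.ncard_eq_toFinset_card', Set.toFinset_compl, Set.toFinset_singleton,
    Finset.card_compl, Finset.card_singleton, Fintype.card_fin]

section Cases

variable {n : ℕ} (hn : 1600 ≤ n) (G : SimpleGraph (Fin n))
  (hfree : _root_.Free C4expansion G)
  (x : Fin n) (V1 V2 : Set (Fin n)) (hdisj : Disjoint V1 V2) (hcover : V1 ∪ V2 = {x}ᶜ)
  (hV2 : (V2.ncard : ℝ) ≤ (n : ℝ) / 2 + (n : ℝ) / 50)

include hn hfree hdisj hcover hV2

lemma basicfacts : (∀ u ∈ V1, ∀ w ∈ V2, u ≠ w) ∧ (∀ y ∈ V2, y ≠ x) ∧ (1600 : ℝ) ≤ (n : ℝ) := by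
  refine ⟨fun u hu w hw he => (Set.disjoint_left.mp hdisj hu) (he ▸ hw), fun y hy => ?_, ?_⟩
  · have : y ∈ ({x}ᶜ : Set (Fin n)) := hcover ▸ Set.mem_union_right _ hy
    simpa using this
  · exact_mod_cast hn

omit hfree hdisj hcover in
lemma pair_inter {a b : Fin n}
    (haN : 2 * (n : ℝ) / 5 ≤ ((G.neighborSet a ∩ V2).ncard : ℝ))
    (hbN : 2 * (n : ℝ) / 5 ≤ ((G.neighborSet b ∩ V2).ncard : ℝ)) :
    7 * (n : ℝ) / 25 ≤ (((G.neighborSet a ∩ V2) ∩ (G.neighborSet b ∩ V2)).ncard : ℝ) := by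
  have h := inter_lower (Set.inter_subset_right (s := G.neighborSet a) (t := V2))
    (Set.inter_subset_right (s := G.neighborSet b) (t := V2))
  have h' : ((G.neighborSet a ∩ V2).ncard : ℝ) + ((G.neighborSet b ∩ V2).ncard : ℝ) ≤
      (((G.neighborSet a ∩ V2) ∩ (G.neighborSet b ∩ V2)).ncard : ℝ) + (V2.ncard : ℝ) := by
    exact_mod_cast h
  linarith

omit hdisj hcover hV2 in
lemma pool_big {v : Fin n} (hvT : (n : ℝ) / 200 ≤ (edgeTriangleDeg G v x : ℝ))
    (L : Finset (Fin n)) (hL : L.card ≤ 7) :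
    ∃ w ∈ {w : Fin n | G.Adj v w ∧ G.Adj x w}, w ∉ L := by
  apply exists_avoid
  have hnr : (1600 : ℝ) ≤ (n : ℝ) := by exact_mod_cast hn
  have : (7 : ℝ) < ({w : Fin n | G.Adj v w ∧ G.Adj x w}.ncard : ℝ) := by
    have : edgeTriangleDeg G v x = {w : Fin n | G.Adj v w ∧ G.Adj x w}.ncard := rfl
    rw [this] at hvT
    linarith
  have h7 : 7 < {w : Fin n | G.Adj v w ∧ G.Adj x w}.ncard := by exact_mod_cast this
  omega

lemma shared_case {a b c : Fin n}
    (ha1 : a ∈ V1) (hax : G.Adj a x) (haT : (n : ℝ) / 200 ≤ (edgeTriangleDeg G a x : ℝ))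
    (haN : 2 * (n : ℝ) / 5 ≤ ((G.neighborSet a ∩ V2).ncard : ℝ))
    (hb1 : b ∈ V1) (hbx : G.Adj b x)
    (hbN : 2 * (n : ℝ) / 5 ≤ ((G.neighborSet b ∩ V2).ncard : ℝ))
    (hc1 : c ∈ V1) (hcx : G.Adj c x) (hcT : (n : ℝ) / 200 ≤ (edgeTriangleDeg G c x : ℝ))
    (hcN : 2 * (n : ℝ) / 5 ≤ ((G.neighborSet c ∩ V2).ncard : ℝ))
    (hab : G.Adj a b) (hbc : G.Adj b c) (hac : a ≠ c) : False := by
  obtain ⟨hV1V2, hV2x, hnr⟩ := basicfacts hn G hfree x V1 V2 hdisj hcover hV2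
  -- pick y1 common neighbor of a,b in V2
  have hY12 := pair_inter hn G V2 hV2 haN hbN
  have hY23 := pair_inter hn G V2 hV2 hbN hcN
  obtain ⟨y1, hy1, -⟩ : ∃ y ∈ (G.neighborSet a ∩ V2) ∩ (G.neighborSet b ∩ V2), y ∉ (∅ : Finset (Fin n)) := by
    apply exists_avoid
    rw [Finset.card_empty]
    have : (0 : ℝ) < (((G.neighborSet a ∩ V2) ∩ (G.neighborSet b ∩ V2)).ncard : ℝ) := by linarith
    exact_mod_cast this
  obtain ⟨y2, hy2, hy2y1⟩ : ∃ y ∈ (G.neighborSet b ∩ V2) ∩ (G.neighborSet c ∩ V2), y ∉ ({y1} : Finset (Fin n)) := by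
    apply exists_avoid
    rw [Finset.card_singleton]
    have : (1 : ℝ) < (((G.neighborSet b ∩ V2) ∩ (G.neighborSet c ∩ V2)).ncard : ℝ) := by linarith
    exact_mod_cast this
  rw [Finset.mem_singleton] at hy2y1
  obtain ⟨w1, hw1P, hw1L⟩ := pool_big hn G hfree x haT ({x, a, b, c, y1, y2, y2}) (card_le_seven _ _ _ _ _ _ _)
  obtain ⟨w2, hw2P, hw2L⟩ := pool_big hn G hfree x hcT ({x, a, b, c, y1, y2, w1}) (card_le_seven _ _ _ _ _ _ _)
  simp only [Finset.mem_insert, Finset.mem_singleton, not_or] at hw1L hw2L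
  obtain ⟨hw1x, hw1a, hw1b, hw1c, hw1y1, hw1y2, -⟩ := hw1L
  obtain ⟨hw2x, hw2a, hw2b, hw2c, hw2y1, hw2y2, hw2w1⟩ := hw2L
  obtain ⟨hw1va, hw1vx⟩ := hw1P
  obtain ⟨hw2vc, hw2vx⟩ := hw2P
  have hay1 : G.Adj a y1 := hy1.1.1
  have hby1 : G.Adj b y1 := hy1.2.1
  have hy1V2 : y1 ∈ V2 := hy1.1.2
  have hby2 : G.Adj b y2 := hy2.1.1
  have hcy2 : G.Adj c y2 := hy2.2.1
  have hy2V2 : y2 ∈ V2 := hy2.1.2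
  exact hfree (contains_C4exp G x a b c w1 y1 y2 w2
    hax.symm hab hbc hcx
    hw1vx.symm hw1va.symm hay1.symm hby1.symm hby2.symm hcy2.symm hw2vc.symm hw2vx.symm
    hax.ne' hbx.ne' hcx.ne' hab.ne hac hbc.ne
    hw1y1 hw1y2 (fun h => hw2w1 h.symm)
    (Ne.symm hy2y1) (fun h => hw2y1 h.symm) (fun h => hw2y2 h.symm)
    hw1vx.ne (Ne.symm (hV2x y1 hy1V2)) (Ne.symm (hV2x y2 hy2V2)) hw2vx.ne
    (Ne.symm hw1a) hay1.ne (hV1V2 a ha1 y2 hy2V2) (Ne.symm hw2a)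
    (Ne.symm hw1b) hby1.ne hby2.ne (Ne.symm hw2b)
    (Ne.symm hw1c) (hV1V2 c hc1 y1 hy1V2) hcy2.ne hw2vc.ne)

lemma disjoint_case {a b c d : Fin n}
    (ha1 : a ∈ V1) (hax : G.Adj a x) (haT : (n : ℝ) / 200 ≤ (edgeTriangleDeg G a x : ℝ))
    (haN : 2 * (n : ℝ) / 5 ≤ ((G.neighborSet a ∩ V2).ncard : ℝ))
    (hb1 : b ∈ V1) (hbx : G.Adj b x)
    (hbN : 2 * (n : ℝ) / 5 ≤ ((G.neighborSet b ∩ V2).ncard : ℝ))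
    (hc1 : c ∈ V1) (hcx : G.Adj c x) (hcT : (n : ℝ) / 200 ≤ (edgeTriangleDeg G c x : ℝ))
    (hcN : 2 * (n : ℝ) / 5 ≤ ((G.neighborSet c ∩ V2).ncard : ℝ))
    (hd1 : d ∈ V1) (hdx : G.Adj d x)
    (hdN : 2 * (n : ℝ) / 5 ≤ ((G.neighborSet d ∩ V2).ncard : ℝ))
    (hab : G.Adj a b) (hcd : G.Adj c d)
    (hac : a ≠ c) (had : a ≠ d) (hbc : b ≠ c) (hbd : b ≠ d) : False := by
  obtain ⟨hV1V2, hV2x, hnr⟩ := basicfacts hn G hfree x V1 V2 hdisj hcover hV2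
  have hI1 := pair_inter hn G V2 hV2 haN hbN
  have hI2 := pair_inter hn G V2 hV2 hcN hdN
  set I1 := (G.neighborSet a ∩ V2) ∩ (G.neighborSet b ∩ V2) with hI1d
  set I2 := (G.neighborSet c ∩ V2) ∩ (G.neighborSet d ∩ V2) with hI2d
  have hq := inter_lower (A := I1) (B := I2) (W := V2)
    (Set.inter_subset_left.trans Set.inter_subset_right)
    (Set.inter_subset_left.trans Set.inter_subset_right)
  have hqR : (I1.ncard : ℝ) + (I2.ncard : ℝ) ≤ ((I1 ∩ I2).ncard : ℝ) + (V2.ncard : ℝ) := by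
    exact_mod_cast hq
  obtain ⟨y, hy, -⟩ : ∃ y ∈ I1 ∩ I2, y ∉ (∅ : Finset (Fin n)) := by
    apply exists_avoid
    rw [Finset.card_empty]
    have : (0 : ℝ) < ((I1 ∩ I2).ncard : ℝ) := by linarith
    exact_mod_cast this
  obtain ⟨w1, hw1P, hw1L⟩ := pool_big hn G hfree x hcT ({x, a, b, c, d, y, y}) (card_le_seven _ _ _ _ _ _ _)
  obtain ⟨w2, hw2P, hw2L⟩ := pool_big hn G hfree x haT ({x, a, b, c, d, y, w1}) (card_le_seven _ _ _ _ _ _ _)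
  simp only [Finset.mem_insert, Finset.mem_singleton, not_or] at hw1L hw2L
  obtain ⟨hw1x, hw1a, hw1b, hw1c, hw1d, hw1y, -⟩ := hw1L
  obtain ⟨hw2x, hw2a, hw2b, hw2c, hw2d, hw2y, hw2w1⟩ := hw2L
  obtain ⟨hw1vc, hw1vx⟩ := hw1P
  obtain ⟨hw2va, hw2vx⟩ := hw2P
  have hay : G.Adj a y := hy.1.1.1
  have hby : G.Adj b y := hy.1.2.1
  have hcy : G.Adj c y := hy.2.1.1
  have hdy : G.Adj d y := hy.2.2.1
  have hyV2 : y ∈ V2 := hy.1.1.2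
  exact hfree (contains_C4exp G a y c x b d w1 w2
    hay hcy.symm hcx hax.symm
    hab.symm hby hdy hcd.symm hw1vc.symm hw1vx.symm hw2vx.symm hw2va.symm
    (hV1V2 a ha1 y hyV2) hac hax.ne
    (Ne.symm (hV1V2 c hc1 y hyV2)) (hV2x y hyV2) hcx.ne
    hbd (Ne.symm hw1b) (fun h => hw2b h.symm)
    (Ne.symm hw1d) (fun h => hw2d h.symm) (fun h => hw2w1 h.symm)
    hab.ne had (Ne.symm hw1a) hw2va.ne
    (Ne.symm (hV1V2 b hb1 y hyV2)) (Ne.symm (hV1V2 d hd1 y hyV2)) (Ne.symm hw1y) (Ne.symm hw2y)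
    (Ne.symm hbc) hcd.ne hw1vc.ne (Ne.symm hw2c)
    hbx.ne' hdx.ne' hw1vx.ne hw2vx.ne)

end Cases

section OneSide

variable {n : ℕ} (hn : 1600 ≤ n) (G : SimpleGraph (Fin n))
  (hfree : _root_.Free C4expansion G)
  (x : Fin n) (V1 V2 : Set (Fin n)) (hdisj : Disjoint V1 V2) (hcover : V1 ∪ V2 = {x}ᶜ)
  (hV2 : (V2.ncard : ℝ) ≤ (n : ℝ) / 2 + (n : ℝ) / 50)

include hn hfree hdisj hcover hV2 in
lemma one_side (D1' : Set (Fin n))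
    (hD1' : ∀ v ∈ D1', v ∈ V1 ∧ G.Adj v x ∧ (n : ℝ) / 200 ≤ (edgeTriangleDeg G v x : ℝ) ∧
      2 * (n : ℝ) / 5 ≤ ((G.neighborSet v ∩ V2).ncard : ℝ)) :
    {e : Sym2 (Fin n) | e ∈ G.edgeSet ∧ ∀ v ∈ e, v ∈ D1'}.ncard ≤ 1 := by
  rw [Set.ncard_le_one (Set.toFinite _)]
  rintro e he f hf
  by_contra hne
  induction e using Sym2.ind with | _ a b => ?_
  induction f using Sym2.ind with | _ c d => ?_
  obtain ⟨heE, heD⟩ := he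
  obtain ⟨hfE, hfD⟩ := hf
  have hab : G.Adj a b := G.mem_edgeSet.mp heE
  have hcd : G.Adj c d := G.mem_edgeSet.mp hfE
  obtain ⟨ha1, hax, haT, haN⟩ := hD1' a (heD a (Sym2.mem_mk_left a b))
  obtain ⟨hb1, hbx, hbT, hbN⟩ := hD1' b (heD b (Sym2.mem_mk_right a b))
  obtain ⟨hc1, hcx, hcT, hcN⟩ := hD1' c (hfD c (Sym2.mem_mk_left c d))
  obtain ⟨hd1, hdx, hdT, hdN⟩ := hD1' d (hfD d (Sym2.mem_mk_right c d))
  by_cases h1 : a = c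
  · subst h1
    have hbd : b ≠ d := fun h => hne (by rw [h])
    exact shared_case hn G hfree x V1 V2 hdisj hcover hV2
      hb1 hbx hbT hbN ha1 hax haN hd1 hdx hdT hdN hab.symm hcd hbd
  by_cases h2 : a = d
  · subst h2
    have hbc : b ≠ c := fun h => hne (by subst h; exact Sym2.eq_swap)
    exact shared_case hn G hfree x V1 V2 hdisj hcover hV2
      hb1 hbx hbT hbN ha1 hax haN hc1 hcx hcT hcN hab.symm hcd.symm hbc
  by_cases h3 : b = c
  · subst h3
    exact shared_case hn G hfree x V1 V2 hdisj hcover hV2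
      ha1 hax haT haN hb1 hbx hbN hd1 hdx hdT hdN hab hcd h2
  by_cases h4 : b = d
  · subst h4
    exact shared_case hn G hfree x V1 V2 hdisj hcover hV2
      ha1 hax haT haN hb1 hbx hbN hc1 hcx hcT hcN hab hcd.symm h1
  · exact disjoint_case hn G hfree x V1 V2 hdisj hcover hV2
      ha1 hax haT haN hb1 hbx hbN hc1 hcx hcT hcN hd1 hdx hdN hab hcd h1 h2 h3 h4

end OneSide

/-- There exist `δ₀ > 0` and `n₀` such that for all `0 < δ ≤ δ₀` and `n ≥ n₀`,
under the Setup, `G` has at most one edge inside `D₁'` and at most one edge inside `D₂'`. -/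

theorem stmt18 : ∃ δ0 : ℝ, 0 < δ0 ∧ ∃ n0 : ℕ,
    ∀ δ : ℝ, 0 < δ → δ ≤ δ0 → ∀ n : ℕ, n0 ≤ n →
    ∀ G : SimpleGraph (Fin n), _root_.Free C4expansion G →
    (∀ u v : Fin n, G.Adj u v → ∃ w : Fin n, G.Adj u w ∧ G.Adj v w) →
    ∀ (x : Fin n) (V1 V2 : Set (Fin n)),
    Disjoint V1 V2 → V1 ∪ V2 = {x}ᶜ →
    (∀ W1 W2 : Set (Fin n), Disjoint W1 W2 → W1 ∪ W2 = {x}ᶜ →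
      crossEdges G W1 W2 ≤ crossEdges G V1 V2) →
    ((n : ℝ) ^ 2 / 4 - 2 * δ * (n : ℝ) ^ 2 ≤ (crossEdges G V1 V2 : ℝ)) →
    ∀ D : Set (Fin n),
    D = {v : Fin n | v ≠ x ∧ G.Adj v x ∧
      (n : ℝ) / 200 ≤ (edgeTriangleDeg G v x : ℝ)} →
    ∀ D1 D2 : Set (Fin n), D1 = D ∩ V1 → D2 = D ∩ V2 →
    ∀ D1' D2' : Set (Fin n),
    D1' = {v ∈ D1 | 2 * (n : ℝ) / 5 ≤ ((G.neighborSet v ∩ V2).ncard : ℝ)} →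
    D2' = {v ∈ D2 | 2 * (n : ℝ) / 5 ≤ ((G.neighborSet v ∩ V1).ncard : ℝ)} →
    ({e : Sym2 (Fin n) | e ∈ G.edgeSet ∧ ∀ v ∈ e, v ∈ D1'}.ncard ≤ 1 ∧
      {e : Sym2 (Fin n) | e ∈ G.edgeSet ∧ ∀ v ∈ e, v ∈ D2'}.ncard ≤ 1) := by
  refine ⟨1/5000, by norm_num, 1600, ?_⟩
  intro δ hδpos hδle n hn G hfree _htri x V1 V2 hdisj hcover _hmax hcross
    D hD D1 D2 hD1 hD2 D1' D2' hD1' hD2'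
  subst hD1'; subst hD2'; subst hD1; subst hD2; subst hD
  have hn1 : 1 ≤ n := by omega
  have hsum := parts_card hn1 x V1 V2 hdisj hcover
  have hcle := crossEdges_le G V1 V2
  have hnR : (1600 : ℝ) ≤ (n : ℝ) := by exact_mod_cast hn
  have hsumR : (V1.ncard : ℝ) + (V2.ncard : ℝ) = (n : ℝ) - 1 := by
    have h := congrArg (Nat.cast (R := ℝ)) hsum
    push_cast [Nat.cast_sub hn1] at h
    linarith
  have hprodR : (n : ℝ) ^ 2 / 4 - 2 * δ * (n : ℝ) ^ 2 ≤ (V1.ncard : ℝ) * (V2.ncard : ℝ) := by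
    refine le_trans hcross ?_
    exact_mod_cast hcle
  have hδn : δ * (n : ℝ) ^ 2 ≤ (1/5000) * (n : ℝ) ^ 2 :=
    mul_le_mul_of_nonneg_right hδle (sq_nonneg _)
  have hm1nn : (0 : ℝ) ≤ (V1.ncard : ℝ) := Nat.cast_nonneg _
  have hm2nn : (0 : ℝ) ≤ (V2.ncard : ℝ) := Nat.cast_nonneg _
  have hm2R : (V2.ncard : ℝ) ≤ (n : ℝ) / 2 + (n : ℝ) / 50 := by
    nlinarith [sq_nonneg ((V2.ncard : ℝ) - (n : ℝ) / 2 - (n : ℝ) / 50)]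
  have hm1R : (V1.ncard : ℝ) ≤ (n : ℝ) / 2 + (n : ℝ) / 50 := by
    nlinarith [sq_nonneg ((V1.ncard : ℝ) - (n : ℝ) / 2 - (n : ℝ) / 50)]
  constructor
  · apply one_side hn G hfree x V1 V2 hdisj hcover hm2R
    rintro v ⟨⟨⟨_, hvx, hvT⟩, hv1⟩, hvN⟩
    exact ⟨hv1, hvx, hvT, hvN⟩
  · apply one_side hn G hfree x V2 V1 hdisj.symm (by rw [Set.union_comm]; exact hcover) hm1R
    rintro v ⟨⟨⟨_, hvx, hvT⟩, hv2⟩, hvN⟩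
    exact ⟨hv2, hvx, hvT, hvN⟩
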